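/- For real numbers p ≥ 0 and q > 0 and every integer n ≥ 0, the combined map from the disjoint union ⨿_{k+l=n} (Δᵏ_p × Δˡ_q) to Δⁿ_{p+q}, induced by the prismatic maps μ^{k,l}_{p,q}, is a continuous surjection, and hence a quotient map (its domain being compact and its codomain Hausdorff). -/

import Mathlib

open Topology

/-- The scaled `n`-simplex `Δⁿ_p ⊆ ℝ^{n+1}`. -/
def SSimplex (n : ℕ) (p : ℝ) : Type :=
  {t : Fin (n + 1) → ℝ // (∀ i, 0 ≤ t i) ∧ ∑ i, t i = p}

instance (n : ℕ) (p : ℝ) : TopologicalSpace (SSimplex n p) :=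
  inferInstanceAs (TopologicalSpace {t : Fin (n + 1) → ℝ // (∀ i, 0 ≤ t i) ∧ ∑ i, t i = p})

/-- The underlying formula of the prismatic map:
`((s₀,…,s_k),(t₀,…,t_l)) ↦ (s₀,…,s_{k−1}, s_k + t₀, t₁,…,t_l)`. -/
def prismFun (k l : ℕ) (s : Fin (k + 1) → ℝ) (t : Fin (l + 1) → ℝ) :
    Fin (k + l + 1) → ℝ :=
  (Fin.append (Fin.init s) (Fin.cons (s (Fin.last k) + t 0) (Fin.tail t)) :
    Fin (k + (l + 1)) → ℝ)

theorem prismFun_mem {k l : ℕ} {p q : ℝ} {s : Fin (k + 1) → ℝ} {t : Fin (l + 1) → ℝ}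
    (hs : (∀ i, 0 ≤ s i) ∧ ∑ i, s i = p) (ht : (∀ i, 0 ≤ t i) ∧ ∑ i, t i = q) :
    (∀ i, 0 ≤ prismFun k l s t i) ∧ ∑ i, prismFun k l s t i = p + q := by
  have key : (∀ i : Fin (k + (l + 1)),
        0 ≤ Fin.append (Fin.init s) (Fin.cons (s (Fin.last k) + t 0) (Fin.tail t)) i) ∧
      ∑ i : Fin (k + (l + 1)),
        Fin.append (Fin.init s) (Fin.cons (s (Fin.last k) + t 0) (Fin.tail t)) i = p + q := by
    constructor
    · intro i
      refine Fin.addCases (fun j => ?_) (fun j => ?_) i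
      · rw [Fin.append_left]
        exact hs.1 _
      · rw [Fin.append_right]
        refine Fin.cases ?_ (fun j => ?_) j
        · simpa using add_nonneg (hs.1 _) (ht.1 _)
        · simpa [Fin.tail] using ht.1 _
    · rw [Fin.sum_univ_add]
      simp only [Fin.append_left, Fin.append_right]
      rw [Fin.sum_cons]
      have h1 : ∑ i : Fin (k + 1), s i = ∑ i : Fin k, Fin.init s i + s (Fin.last k) := by
        rw [Fin.sum_univ_castSucc]
        simp [Fin.init]
      have h2 : ∑ i : Fin (l + 1), t i = t 0 + ∑ i : Fin l, Fin.tail t i := by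
        rw [Fin.sum_univ_succ]
        simp [Fin.tail]
      rw [← hs.2, ← ht.2, h1, h2]
      ring
  exact key

/-- The prismatic map `μ^{k,l}_{p,q} : Δᵏ_p × Δˡ_q → Δ^{k+l}_{p+q}`. -/
def prismMap (k l : ℕ) (p q : ℝ) (x : SSimplex k p × SSimplex l q) :
    SSimplex (k + l) (p + q) :=
  ⟨prismFun k l x.1.1 x.2.1, prismFun_mem x.1.2 x.2.2⟩

/-- Transport a point of `Δᵐ_p` along an equality `m = n` of dimensions. -/
def castSimplex {m n : ℕ} (h : m = n) {p : ℝ} (x : SSimplex m p) : SSimplex n p :=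
  ⟨x.1 ∘ Fin.cast (congrArg (· + 1) h.symm), by
    refine ⟨fun i => x.2.1 _, ?_⟩
    exact (Fintype.sum_equiv (finCongr (congrArg (· + 1) h.symm))
      (x.1 ∘ Fin.cast (congrArg (· + 1) h.symm)) x.1 (fun i => rfl)).trans x.2.2⟩


section Aux

instance ssimplexT2 (m : ℕ) (p : ℝ) : T2Space (SSimplex m p) :=
  inferInstanceAs (T2Space {t : Fin (m + 1) → ℝ // (∀ i, 0 ≤ t i) ∧ ∑ i, t i = p})

lemma ssimplex_isCompact (m : ℕ) (p : ℝ) :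
    IsCompact {t : Fin (m + 1) → ℝ | (∀ i, 0 ≤ t i) ∧ ∑ i, t i = p} := by
  apply IsCompact.of_isClosed_subset
    (isCompact_Icc (a := (0 : Fin (m + 1) → ℝ)) (b := fun _ => |p|))
  · have h1 : IsClosed {t : Fin (m + 1) → ℝ | ∀ i, 0 ≤ t i} := by
      have : {t : Fin (m + 1) → ℝ | ∀ i, 0 ≤ t i} = ⋂ i, {t | 0 ≤ t i} := by
        ext; simp
      rw [this]
      exact isClosed_iInter fun i => isClosed_le continuous_const (continuous_apply i)
    have h2 : IsClosed {t : Fin (m + 1) → ℝ | ∑ i, t i = p} :=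
      isClosed_eq (by continuity) continuous_const
    exact h1.inter h2
  · rintro t ⟨h0, hs⟩
    constructor
    · intro i; exact h0 i
    · intro i
      calc t i ≤ ∑ j, t j := Finset.single_le_sum (fun j _ => h0 j) (Finset.mem_univ i)
        _ = p := hs
        _ ≤ |p| := le_abs_self p

instance ssimplexCompact (m : ℕ) (p : ℝ) : CompactSpace (SSimplex m p) :=
  isCompact_iff_compactSpace.mp (ssimplex_isCompact m p)

instance finiteIndex (n : ℕ) : Finite {x : ℕ × ℕ // x.1 + x.2 = n} := by
  apply Finite.of_injective (fun x : {x : ℕ × ℕ // x.1 + x.2 = n} =>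
    (⟨x.1.1, by omega⟩ : Fin (n + 1)))
  intro a b h
  have h1 : a.1.1 = b.1.1 := by simpa using congrArg Fin.val h
  have h2 : a.1.2 = b.1.2 := by have := a.2; have := b.2; omega
  exact Subtype.ext (Prod.ext h1 h2)

lemma continuous_prismFun (k l : ℕ) (p q : ℝ) (j : Fin (k + (l + 1))) :
    Continuous fun x : SSimplex k p × SSimplex l q => prismFun k l x.1.1 x.2.1 j := by
  induction j using Fin.addCases with
  | left j =>
    simp only [prismFun, Fin.append_left, Fin.init]
    exact (continuous_apply _).comp (continuous_subtype_val.comp continuous_fst)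
  | right j =>
    simp only [prismFun, Fin.append_right]
    induction j using Fin.cases with
    | zero =>
      simp only [Fin.cons_zero]
      exact ((continuous_apply _).comp (continuous_subtype_val.comp continuous_fst)).add
        ((continuous_apply _).comp (continuous_subtype_val.comp continuous_snd))
    | succ m =>
      simp only [Fin.cons_succ, Fin.tail]
      exact (continuous_apply _).comp (continuous_subtype_val.comp continuous_snd)

end Aux

/-- For `p ≥ 0`, `q > 0` and `n ≥ 0`, the combined map
`⨿_{k+l=n} (Δᵏ_p × Δˡ_q) → Δⁿ_{p+q}` induced by the prismatic maps `μ^{k,l}_{p,q}` is a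
continuous surjection, and hence a quotient map. -/
theorem prism_isQuotientMap (p q : ℝ) (hp : 0 ≤ p) (hq : 0 < q) (n : ℕ) :
    Continuous
        (fun x : Σ kl : {x : ℕ × ℕ // x.1 + x.2 = n}, SSimplex kl.1.1 p × SSimplex kl.1.2 q =>
          castSimplex x.1.2 (prismMap x.1.1.1 x.1.1.2 p q x.2)) ∧
      Function.Surjective
        (fun x : Σ kl : {x : ℕ × ℕ // x.1 + x.2 = n}, SSimplex kl.1.1 p × SSimplex kl.1.2 q =>
          castSimplex x.1.2 (prismMap x.1.1.1 x.1.1.2 p q x.2)) ∧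
      IsQuotientMap
        (fun x : Σ kl : {x : ℕ × ℕ // x.1 + x.2 = n}, SSimplex kl.1.1 p × SSimplex kl.1.2 q =>
          castSimplex x.1.2 (prismMap x.1.1.1 x.1.1.2 p q x.2)) := by
    classical
  set G := (fun x : Σ kl : {x : ℕ × ℕ // x.1 + x.2 = n}, SSimplex kl.1.1 p × SSimplex kl.1.2 q =>
    castSimplex x.1.2 (prismMap x.1.1.1 x.1.1.2 p q x.2)) with hG
  have hcont : Continuous G := by
    apply continuous_sigma
    rintro ⟨⟨k, l⟩, hkl⟩
    apply Continuous.subtype_mk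
    apply continuous_pi
    intro i
    show Continuous fun x : SSimplex k p × SSimplex l q =>
      prismFun k l x.1.1 x.2.1 (Fin.cast (congrArg (· + 1) hkl.symm) i)
    exact continuous_prismFun k l p q _
  have hsurj : Function.Surjective G := by
    rintro ⟨u, hu0, hus⟩
    set v : ℕ → ℝ := fun i => if h : i < n + 1 then u ⟨i, h⟩ else 0 with hv
    have hv0 : ∀ i, 0 ≤ v i := by
      intro i; simp only [hv]; split
      · exact hu0 _
      · exact le_refl 0
    set S : ℕ → ℝ := fun j => ∑ i ∈ Finset.range j, v i with hS
    have hSn : S (n + 1) = p + q := by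
      show ∑ i ∈ Finset.range (n + 1), v i = p + q
      rw [← Fin.sum_univ_eq_sum_range, ← hus]
      exact Finset.sum_congr rfl fun i _ => by simp [hv, i.isLt, Nat.not_lt.mpr (Nat.lt_succ_iff.mp i.isLt)]
    have hSmono : Monotone S := fun a b hab =>
      Finset.sum_le_sum_of_subset_of_nonneg (Finset.range_subset_range.mpr hab)
        (fun i _ _ => hv0 i)
    set k := Nat.findGreatest (fun j => S j ≤ p) n with hk
    have hkn : k ≤ n := Nat.findGreatest_le n
    have hS0 : S 0 ≤ p := by
      show ∑ i ∈ Finset.range 0, v i ≤ p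
      simpa using hp
    have hSk : S k ≤ p :=
      Nat.findGreatest_spec (P := fun j => S j ≤ p) (Nat.zero_le n) hS0
    have hSk1 : p ≤ S (k + 1) := by
      by_cases hkeq : k = n
      · rw [hkeq, hSn]; linarith
      · have hlt : k < k + 1 := Nat.lt_succ_self k
        have hle : k + 1 ≤ n := by omega
        have := Nat.findGreatest_is_greatest (P := fun j => S j ≤ p) hlt hle
        linarith [not_le.mp this]
    set l := n - k with hl
    have hkl : k + l = n := by omega
    set s : Fin (k + 1) → ℝ := fun i => if (i : ℕ) < k then v i else p - S k with hs
    set t : Fin (l + 1) → ℝ := fun j => if (j : ℕ) = 0 then S (k + 1) - p else v (k + j) with ht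
    have hsmem : (∀ i, 0 ≤ s i) ∧ ∑ i, s i = p := by
      constructor
      · intro i; simp only [hs]; split
        · exact hv0 _
        · linarith
      · rw [Fin.sum_univ_castSucc]
        have hlast : s (Fin.last k) = p - S k := by simp [hs]
        have hcs : ∀ i : Fin k, s i.castSucc = v i := fun i => by
          simp [hs, i.isLt]
        rw [hlast, Finset.sum_congr rfl (fun i _ => hcs i),
          Fin.sum_univ_eq_sum_range (fun i => v i) k]
        simp only [hS]; ring
    have htmem : (∀ i, 0 ≤ t i) ∧ ∑ i, t i = q := by
      constructor
      · intro i; simp only [ht]; split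
        · linarith
        · exact hv0 _
      · rw [Fin.sum_univ_succ]
        have h0 : t 0 = S (k + 1) - p := by simp [ht]
        have hsucc : ∀ j : Fin l, t j.succ = v (k + 1 + j) := fun j => by
          simp only [ht, Fin.val_succ]
          rw [if_neg (by omega)]
          ring_nf
        rw [h0, Finset.sum_congr rfl (fun j _ => hsucc j),
          Fin.sum_univ_eq_sum_range (fun j => v (k + 1 + j)) l]
        have : ∑ j ∈ Finset.range l, v (k + 1 + j) = S (k + 1 + l) - S (k + 1) := by
          rw [hS, eq_sub_iff_add_eq, add_comm]
          exact (Finset.sum_range_add v (k + 1) l).symm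
        rw [this]
        have : k + 1 + l = n + 1 := by omega
        rw [this, hSn]; ring
    have key : ∀ j : Fin (k + (l + 1)), prismFun k l s t j = v j := by
      intro j
      induction j using Fin.addCases with
      | left j =>
        simp only [prismFun, Fin.append_left, Fin.init, Fin.coe_castAdd]
        simp [hs, j.isLt]
      | right j =>
        simp only [prismFun, Fin.append_right, Fin.coe_natAdd]
        induction j using Fin.cases with
        | zero =>
          simp only [Fin.cons_zero, Fin.val_zero, Nat.add_zero]
          have h1 : s (Fin.last k) = p - S k := by simp [hs]
          have h2 : t 0 = S (k + 1) - p := by simp [ht]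
          have h3 : S (k + 1) = S k + v k := Finset.sum_range_succ v k
          rw [h1, h2]; linarith
        | succ m =>
          simp only [Fin.cons_succ, Fin.tail, ht, Fin.val_succ]
          rw [if_neg (by omega)]
    refine ⟨⟨⟨(k, l), hkl⟩, ⟨s, hsmem⟩, ⟨t, htmem⟩⟩, ?_⟩
    apply Subtype.ext
    funext i
    show prismFun k l s t (Fin.cast _ i) = u i
    rw [key]
    simp [hv, Fin.val_cast_of_lt, i.isLt, Nat.not_lt.mpr (Nat.lt_succ_iff.mp i.isLt)]
  exact ⟨hcont, hsurj, hcont.isClosedMap.isQuotientMap hcont hsurj⟩
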